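/- arXiv:2303.00213 — 3 statements merged into one kernel-verified Lean document; each statement's English description precedes it below -/
import Mathlib

section
/- Let (C, E) be a complete hereditary cotorsion pair in the category of left R-modules, and let D be a subclass of C. Then D is a special precovering class if and only if every module in C has a special D-precover. -/
open CategoryTheory Limits

universe u

variable (R : Type u) [Ring R]

/-- `extVanish R n A B` means the `n`-th Ext group `Ext^n(A, B)` vanishes. -/
noncomputable def extVanish (n : ℕ) (A B : ModuleCat.{u} R) : Prop :=
  Subsingleton (((Ext ℤ (ModuleCat.{u} R) n).obj (Opposite.op A)).obj B)

/-- The right `Ext^1`-orthogonal class of a class of modules. -/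
def rightOrth (D : Set (ModuleCat.{u} R)) : Set (ModuleCat.{u} R) :=
  {M | ∀ D' ∈ D, extVanish R 1 D' M}

/-- The left `Ext^1`-orthogonal class of a class of modules. -/
def leftOrth (E : Set (ModuleCat.{u} R)) : Set (ModuleCat.{u} R) :=
  {M | ∀ E' ∈ E, extVanish R 1 M E'}

/-- `0 → A → B → C → 0` is a short exact sequence. -/
def IsShortExact {A B C : ModuleCat.{u} R} (f : A ⟶ B) (g : B ⟶ C) : Prop :=
  Function.Injective f ∧ Function.Surjective g ∧ Function.Exact f g

/-- `(𝒜, ℬ)` is a cotorsion pair: each class is the Ext¹-orthogonal of the other. -/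
def IsCotorsionPair (A B : Set (ModuleCat.{u} R)) : Prop :=
  A = leftOrth R B ∧ B = rightOrth R A

/-- Completeness of a cotorsion pair `(𝒜, ℬ)`. -/
def IsCompletePair (A B : Set (ModuleCat.{u} R)) : Prop :=
  (∀ M : ModuleCat.{u} R, ∃ (S C : ModuleCat.{u} R) (f : S ⟶ C) (g : C ⟶ M),
      S ∈ B ∧ C ∈ A ∧ IsShortExact R f g) ∧
  (∀ M : ModuleCat.{u} R, ∃ (E C : ModuleCat.{u} R) (f : M ⟶ E) (g : E ⟶ C),
      E ∈ B ∧ C ∈ A ∧ IsShortExact R f g)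

/-- Heredity of a pair: `Ext^i(A, B) = 0` for all `i ≥ 1`, `A ∈ 𝒜`, `B ∈ ℬ`. -/
def IsHereditaryPair (A B : Set (ModuleCat.{u} R)) : Prop :=
  ∀ n : ℕ, 1 ≤ n → ∀ A' ∈ A, ∀ B' ∈ B, extVanish R n A' B'

/-- `M` has a special `𝒟`-precover: a surjection `g : D → M` with `D ∈ 𝒟` and
`Ext¹(D', ker g) = 0` for all `D' ∈ 𝒟`. -/
def HasSpecialPrecover (D : Set (ModuleCat.{u} R)) (M : ModuleCat.{u} R) : Prop :=
  ∃ (G : ModuleCat.{u} R) (g : G ⟶ M), G ∈ D ∧ Function.Surjective g ∧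
    ∀ G' ∈ D, extVanish R 1 G' (ModuleCat.of R (LinearMap.ker g.hom))

/-- `𝒟` is a special precovering class. -/
def IsSpecialPrecovering (D : Set (ModuleCat.{u} R)) : Prop :=
  ∀ M : ModuleCat.{u} R, HasSpecialPrecover R D M

/-- The class of strongly FP-injective modules:
`Ext^i(T, M) = 0` for every finitely presented `T` and every `i ≥ 1`. -/
def SFPI : Set (ModuleCat.{u} R) :=
  {M | ∀ T : ModuleCat.{u} R, Module.FinitePresentation R T →
    ∀ n : ℕ, 1 ≤ n → extVanish R n T M}

/-- The class `𝒞 = ⊥(SFPI)` of weakly FP-projective modules. -/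
def WFP : Set (ModuleCat.{u} R) := leftOrth R (SFPI R)

/-- All components of the complex are projective modules. -/
def HasProjComponents (P : ChainComplex (ModuleCat.{u} R) ℤ) : Prop :=
  ∀ n : ℤ, Module.Projective R (P.X n)

/-- The complex is acyclic (exact). -/
def IsAcyclic (P : ChainComplex (ModuleCat.{u} R) ℤ) : Prop :=
  ∀ n : ℤ, P.ExactAt n

/-- The complex `Hom(P, Q)` is exact. -/
def HomIntoExact (P : ChainComplex (ModuleCat.{u} R) ℤ) (Q : ModuleCat.{u} R) : Prop :=
  ∀ (n : ℤ) (f : P.X n ⟶ Q), P.d (n + 1) n ≫ f = 0 →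
    ∃ g : P.X (n - 1) ⟶ Q, P.d n (n - 1) ≫ g = f

/-- `G` is Gorenstein projective: a cycle of a totally acyclic complex of projectives. -/
noncomputable def IsGorensteinProjective (G : ModuleCat.{u} R) : Prop :=
  ∃ P : ChainComplex (ModuleCat.{u} R) ℤ, HasProjComponents R P ∧ IsAcyclic R P ∧
    (∀ Q : ModuleCat.{u} R, Module.Projective R Q → HomIntoExact R P Q) ∧
    Nonempty (G ≅ P.cycles 0)

/-- `M` is a flat module (via the Lazard–Govorov criterion, valid over any ring:
every map from a finitely presented module into `M` factors through a
finitely generated free module). -/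
def IsFlatModule (M : ModuleCat.{u} R) : Prop :=
  ∀ (F : ModuleCat.{u} R), Module.FinitePresentation R F → ∀ f : F ⟶ M,
    ∃ (k : ℕ) (g : F ⟶ ModuleCat.of R (Fin k → R)) (h : ModuleCat.of R (Fin k → R) ⟶ M),
      g ≫ h = f

/-- `G` is Ding projective: a cycle of an exact complex of projectives which stays
exact under `Hom(-, F)` for every flat module `F`. -/
noncomputable def IsDingProjective (G : ModuleCat.{u} R) : Prop :=
  ∃ P : ChainComplex (ModuleCat.{u} R) ℤ, HasProjComponents R P ∧ IsAcyclic R P ∧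
    (∀ Q : ModuleCat.{u} R, IsFlatModule R Q → HomIntoExact R P Q) ∧
    Nonempty (G ≅ P.cycles 0)

/-- The class of Gorenstein projective modules. -/
noncomputable def GP : Set (ModuleCat.{u} R) := {M | IsGorensteinProjective R M}

/-- The class of Ding projective modules. -/
noncomputable def DP : Set (ModuleCat.{u} R) := {M | IsDingProjective R M}

/-- Gorenstein projective dimension at most `n`. -/
noncomputable def GpdLE : ℕ → ModuleCat.{u} R → Prop
  | 0, M => IsGorensteinProjective R M
  | n + 1, M => ∃ (K G : ModuleCat.{u} R) (i : K ⟶ G) (p : G ⟶ M),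
      IsGorensteinProjective R G ∧ IsShortExact R i p ∧ GpdLE n K

/-- Ding projective dimension at most `n`. -/
noncomputable def DpdLE : ℕ → ModuleCat.{u} R → Prop
  | 0, M => IsDingProjective R M
  | n + 1, M => ∃ (K G : ModuleCat.{u} R) (i : K ⟶ G) (p : G ⟶ M),
      IsDingProjective R G ∧ IsShortExact R i p ∧ DpdLE n K

/-- Projective dimension at most `n`. -/
def PdLE : ℕ → ModuleCat.{u} R → Prop
  | 0, M => Module.Projective R M
  | n + 1, M => ∃ (K G : ModuleCat.{u} R) (i : K ⟶ G) (p : G ⟶ M),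
      Module.Projective R G ∧ IsShortExact R i p ∧ PdLE n K

/-- `K` is a `j`-th syzygy of `M`: there is an exact sequence
`0 → K → P_{j-1} → ⋯ → P_0 → M → 0` with the `P_i` projective. -/
def IsSyzygy : ℕ → ModuleCat.{u} R → ModuleCat.{u} R → Prop
  | 0, K, M => Nonempty (K ≅ M)
  | j + 1, K, M => ∃ (K' P : ModuleCat.{u} R) (i : K' ⟶ P) (p : P ⟶ M),
      Module.Projective R P ∧ IsShortExact R i p ∧ IsSyzygy j K K'

section aux
variable {R}

/-- An isomorphism in `ModuleCat` gives an equivalence of the carrier types. -/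
def auxIsoToEquiv {S : Type*} [Ring S] {M N : ModuleCat S} (e : M ≅ N) : M ≃ N :=
  ⟨e.hom, e.inv, fun x => e.hom_inv_id_apply x, fun y => e.inv_hom_id_apply y⟩

lemma aux_subsingleton_of_isZero {S : Type*} [Ring S] {M : ModuleCat S} (h : IsZero M) :
    Subsingleton M := by
  have hid : (𝟙 M : M ⟶ M) = 0 := h.eq_of_src _ _
  refine ⟨fun a b => ?_⟩
  have ha : a = (𝟙 M : M ⟶ M) a := rfl
  have hb : b = (𝟙 M : M ⟶ M) b := rfl
  rw [ha, hb, hid]; rfl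

end aux

lemma extVanish_one_iff (A Y : ModuleCat.{u} R) (P : ProjectiveResolution A) :
    extVanish R 1 A Y ↔ ∀ f : P.complex.X 1 ⟶ Y, P.complex.d 2 1 ≫ f = 0 →
      ∃ g : P.complex.X 0 ⟶ Y, P.complex.d 1 0 ≫ g = f := by
  have e := P.isoExt (R := ℤ) 1 Y
  have h1 : extVanish R 1 A Y ↔ (P.complex.linearYonedaObj ℤ Y).ExactAt 1 := by
    rw [HomologicalComplex.exactAt_iff_isZero_homology]
    unfold extVanish
    constructor
    · intro h
      have : Subsingleton ((P.complex.linearYonedaObj ℤ Y).homology 1) :=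
        Equiv.subsingleton (auxIsoToEquiv e).symm
      exact ModuleCat.isZero_of_subsingleton _
    · intro h
      have : Subsingleton ((P.complex.linearYonedaObj ℤ Y).homology 1) :=
        aux_subsingleton_of_isZero h
      exact Equiv.subsingleton (auxIsoToEquiv e)
  rw [h1, HomologicalComplex.exactAt_iff' _ 0 1 2 (by simp) (by simp),
    ShortComplex.moduleCat_exact_iff]
  constructor
  · intro h f hf
    refine h f ?_
    exact hf
  · intro h x hx
    refine h x ?_
    exact hx

lemma extVanish_one_of_ses {A K L S : ModuleCat.{u} R}
    (i : K ⟶ L) (p : L ⟶ S) (hse : IsShortExact R i p)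
    (hK : extVanish R 1 A K) (hS : extVanish R 1 A S) : extVanish R 1 A L := by
  obtain ⟨P⟩ := (HasProjectiveResolution.out (Z := A))
  rw [extVanish_one_iff R A _ P] at hK hS ⊢
  obtain ⟨hinj, hsurj, hexact⟩ := hse
  intro f hf
  obtain ⟨g, hg⟩ := hS (f ≫ p) (by rw [← Category.assoc, hf, zero_comp])
  have : Epi p := (ModuleCat.epi_iff_surjective p).mpr hsurj
  have hproj : Projective (P.complex.X 0) := P.projective 0
  let g' : P.complex.X 0 ⟶ L := Projective.factorThru g p
  have hg' : g' ≫ p = g := Projective.factorThru_comp g p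
  let w : P.complex.X 1 ⟶ L := f - P.complex.d 1 0 ≫ g'
  have hwp : w ≫ p = 0 := by
    simp only [w, Preadditive.sub_comp, Category.assoc, hg', hg]
    simp
  have hker : LinearMap.ker p.hom = LinearMap.range i.hom := (LinearMap.exact_iff (f := i.hom) (g := p.hom)).mp hexact
  have hw_mem : ∀ x, w x ∈ LinearMap.range i.hom := by
    intro x
    rw [← hker]
    exact DFunLike.congr_fun (congrArg ModuleCat.Hom.hom hwp) x
  let e : K ≃ₗ[R] LinearMap.range i.hom := LinearEquiv.ofInjective i.hom hinj
  let h : P.complex.X 1 ⟶ K :=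
    ModuleCat.ofHom ((e.symm.toLinearMap).comp (w.hom.codRestrict (LinearMap.range i.hom) hw_mem))
  have hih : h ≫ i = w := by
    ext x
    show i (e.symm ⟨w x, hw_mem x⟩) = w x
    have : i (e.symm ⟨w x, hw_mem x⟩) = (e (e.symm ⟨w x, hw_mem x⟩) : L) := rfl
    rw [this, e.apply_symm_apply]
  have hmono : Mono i := (ModuleCat.mono_iff_injective i).mpr hinj
  have hcoc : P.complex.d 2 1 ≫ h = 0 := by
    rw [← cancel_mono i, Category.assoc, hih, zero_comp]
    simp only [w, Preadditive.comp_sub, hf]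
    rw [← Category.assoc, HomologicalComplex.d_comp_d]
    simp
  obtain ⟨k, hk⟩ := hK h hcoc
  refine ⟨g' + k ≫ i, ?_⟩
  rw [Preadditive.comp_add, ← Category.assoc, hk, hih]
  simp [w]

/-- If `(𝒞, ℰ)` is a complete hereditary cotorsion pair and `𝒟 ⊆ 𝒞`, then
`𝒟` is special precovering iff every module in `𝒞` has a special `𝒟`-precover. -/
theorem stmt0 (C E D : Set (ModuleCat.{u} R))
    (hcp : IsCotorsionPair R C E) (hcomplete : IsCompletePair R C E)
    (hhered : IsHereditaryPair R C E) (hDC : D ⊆ C) :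
    IsSpecialPrecovering R D ↔ ∀ M ∈ C, HasSpecialPrecover R D M := by
  constructor
  · intro hsp M _
    exact hsp M
  · intro hD M
    obtain ⟨S, C', f, g, hSE, hC'C, hfinj, hgsurj, hfg⟩ := hcomplete.1 M
    obtain ⟨G, h, hGD, hhsurj, hker⟩ := hD C' hC'C
    refine ⟨G, h ≫ g, hGD, ?_, ?_⟩
    · exact fun m => by
        obtain ⟨c, hc⟩ := hgsurj m
        obtain ⟨x, hx⟩ := hhsurj c
        exact ⟨x, by show g (h x) = m; rw [hx, hc]⟩
    · intro G' hG'
      -- SES : 0 → ker h → ker (h ≫ g) → S → 0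
      set q : G ⟶ M := h ≫ g with hq
      have hqapp : ∀ x, q x = g (h x) := fun x => rfl
      have hle : LinearMap.ker h.hom ≤ LinearMap.ker q.hom := by
        intro x hx
        simp only [LinearMap.mem_ker] at hx ⊢
        rw [hqapp, hx, map_zero]
      have hkerg : LinearMap.ker g.hom = LinearMap.range f.hom := (LinearMap.exact_iff).mp hfg
      let i : ModuleCat.of R (LinearMap.ker h.hom) ⟶ ModuleCat.of R (LinearMap.ker q.hom) :=
        ModuleCat.ofHom (Submodule.inclusion hle)
      have hmem : ∀ x : LinearMap.ker q.hom, h x.1 ∈ LinearMap.range f.hom := by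
        intro x
        rw [← hkerg, LinearMap.mem_ker]
        have := x.2
        rw [LinearMap.mem_ker, hqapp] at this
        exact this
      let eS : S ≃ₗ[R] LinearMap.range f.hom := LinearEquiv.ofInjective f.hom hfinj
      let π : ModuleCat.of R (LinearMap.ker q.hom) ⟶ S :=
        ModuleCat.ofHom (eS.symm.toLinearMap.comp
          (((h.hom).comp (LinearMap.ker q.hom).subtype).codRestrict
            (LinearMap.range f.hom) hmem))
      have hπapp : ∀ x : LinearMap.ker q.hom, π x = eS.symm ⟨h x.1, hmem x⟩ := fun x => rfl
      have hfeS : ∀ s : S, (eS s : C') = f s := fun s => rfl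
      have hπsurj : Function.Surjective π := by
        intro s
        obtain ⟨x, hx⟩ := hhsurj (f s)
        have hxker : x ∈ LinearMap.ker q.hom := by
          rw [LinearMap.mem_ker, hqapp, hx]
          have : f s ∈ LinearMap.range f.hom := ⟨s, rfl⟩
          rw [← hkerg] at this
          exact this
        refine ⟨⟨x, hxker⟩, ?_⟩
        rw [hπapp]
        have : (⟨h x, hmem ⟨x, hxker⟩⟩ : LinearMap.range f.hom) = eS s := by
          apply Subtype.ext
          rw [hfeS]
          exact hx
        rw [this, eS.symm_apply_apply]
      have hπexact : Function.Exact i π := by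
        intro x
        constructor
        · intro hx
          rw [hπapp] at hx
          have : (⟨h x.1, hmem x⟩ : LinearMap.range f.hom) = 0 := by
            have := congrArg eS hx
            rwa [eS.apply_symm_apply, map_zero] at this
          have hhx : h x.1 = 0 := congrArg Subtype.val this
          refine ⟨⟨x.1, by rwa [LinearMap.mem_ker]⟩, ?_⟩
          apply Subtype.ext
          rfl
        · rintro ⟨y, rfl⟩
          rw [hπapp]
          have : h ((i y : LinearMap.ker q.hom)).1 = 0 := y.2
          have h0 : (⟨h (i y).1, hmem (i y)⟩ : LinearMap.range f.hom) = 0 := Subtype.ext this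
          rw [h0, map_zero]
      have hiinj : Function.Injective i := Submodule.inclusion_injective hle
      have hES : extVanish R 1 G' S := by
        have hG'C : G' ∈ leftOrth R E := by rw [← hcp.1]; exact hDC hG'
        exact hG'C S hSE
      exact extVanish_one_of_ses R i π ⟨hiinj, hπsurj, hπexact⟩ (hker G' hG') hES
end

section
/- If R is a left coherent ring, then the class of strongly FP-injective left R-modules coincides with the class of FP-injective left R-modules. -/
open CategoryTheory Limits

universe u

namespace Stmt2Aux
section
variable {R : Type u} [Ring R]

lemma coh_aux (h : ∀ I : Ideal R, I.FG → Module.FinitePresentation R I) :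
    ∀ (k : ℕ) (M : Type u) (_ : AddCommGroup M) (_ : Module R M) (φ : M →ₗ[R] (Fin k → R)),
      Function.Injective φ → Module.Finite R M → Module.FinitePresentation R M := by
  intro k
  induction k with
  | zero =>
    intro M _ _ φ hφ hM
    have : Subsingleton M := ⟨fun a b => hφ (Subsingleton.elim _ _)⟩
    exact Module.finitePresentation_of_surjective (0 : (Fin 0 → R) →ₗ[R] M)
      (fun m => ⟨0, Subsingleton.elim _ _⟩)
      (by rw [show LinearMap.ker (0 : (Fin 0 → R) →ₗ[R] M) = ⊤ from LinearMap.ker_zero]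
          exact Module.Finite.fg_top)
  | succ k ih =>
    intro M _ _ φ hφ hM
    set π : (Fin (k+1) → R) →ₗ[R] R := LinearMap.proj (Fin.last k) with hπdef
    set f : M →ₗ[R] R := π ∘ₗ φ with hfdef
    set I : Ideal R := LinearMap.range f with hIdef
    have hIfg : I.FG := by
      rw [hIdef, ← Submodule.map_top]
      exact Submodule.FG.map _ (Module.Finite.fg_top)
    have hIfp : Module.FinitePresentation R I := h I hIfg
    set f' : M →ₗ[R] I := f.rangeRestrict with hf'def
    have hf's : Function.Surjective f' := f.surjective_rangeRestrict
    have hker : (LinearMap.ker f').FG := Module.FinitePresentation.fg_ker f' hf's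
    have hkerfin : Module.Finite R (LinearMap.ker f') := by
      rwa [Module.Finite.iff_fg]
    -- embed ker f' into Fin k → R
    set g : (Fin (k+1) → R) →ₗ[R] (Fin k → R) := LinearMap.funLeft R R Fin.castSucc with hgdef
    set ψ : (LinearMap.ker f') →ₗ[R] (Fin k → R) := g ∘ₗ φ ∘ₗ (LinearMap.ker f').subtype
    have hψ : Function.Injective ψ := by
      intro x y hxy
      apply Subtype.ext
      apply hφ
      funext j
      rcases Fin.eq_castSucc_or_eq_last j with ⟨j', rfl⟩ | rfl
      · exact congrFun hxy j'
      · have hx : f x.1 = 0 := by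
          have := x.2
          rw [LinearMap.mem_ker] at this
          have : f x.1 = (f' x).1 := rfl
          rw [this, x.2]; rfl
        have hy : f y.1 = 0 := by
          have : f y.1 = (f' y).1 := rfl
          rw [this, y.2]; rfl
        show φ x.1 (Fin.last k) = φ y.1 (Fin.last k)
        have hx' : φ x.1 (Fin.last k) = f x.1 := rfl
        have hy' : φ y.1 (Fin.last k) = f y.1 := rfl
        rw [hx', hy', hx, hy]
    have hkerfp : Module.FinitePresentation R (LinearMap.ker f') :=
      ih _ _ _ ψ hψ hkerfin
    exact Module.finitePresentation_of_ker f' hf's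

end
noncomputable section
variable {R : Type u} [Ring R] {K F T : ModuleCat.{u} R}

def spliceX (P : ProjectiveResolution K) : ℕ → ModuleCat.{u} R
  | 0 => F
  | (j+1) => P.complex.X j

def spliceD (i : K ⟶ F) (P : ProjectiveResolution K) :
    ∀ j : ℕ, spliceX (F := F) P (j+1) ⟶ spliceX (F := F) P j
  | 0 => P.π.f 0 ≫ i
  | (j+1) => P.complex.d (j+1) j

def spliced (i : K ⟶ F) (P : ProjectiveResolution K) : ChainComplex (ModuleCat.{u} R) ℕ :=
  ChainComplex.of (spliceX (F := F) P) (spliceD i P)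
    (fun j => match j with
      | 0 => by
          show P.complex.d 1 0 ≫ (P.π.f 0 ≫ i) = 0
          erw [P.complex_d_comp_π_f_zero_assoc, zero_comp]
      | (j+1) => by
          show P.complex.d (j+2) (j+1) ≫ P.complex.d (j+1) j = 0
          simp)

example (i : K ⟶ F) (P : ProjectiveResolution K) (j : ℕ) :
    (spliced i P).d (j+2) (j+1) = P.complex.d (j+1) j :=
  ChainComplex.of_d _ _ _

example (i : K ⟶ F) (P : ProjectiveResolution K) :
    (spliced i P).d 1 0 = P.π.f 0 ≫ i :=
  ChainComplex.of_d (spliceX (F := F) P) (spliceD i P) 0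

lemma splice_d10 (i : K ⟶ F) (P : ProjectiveResolution K) :
    (spliced i P).d 1 0 = P.π.f 0 ≫ i := ChainComplex.of_d (spliceX (F := F) P) (spliceD i P) 0

lemma splice_dsucc (i : K ⟶ F) (P : ProjectiveResolution K) (j : ℕ) :
    (spliced i P).d (j+2) (j+1) = P.complex.d (j+1) j := ChainComplex.of_d _ _ _

instance spliceProj (i : K ⟶ F) (P : ProjectiveResolution K) [Projective F] (n : ℕ) :
    Projective ((spliced i P).X n) := by
  cases n with
  | zero => exact (inferInstance : Projective F)
  | succ n => exact P.projective n

lemma ip_zero (i : K ⟶ F) (p : F ⟶ T) (hex : Function.Exact i p) : i ≫ p = 0 := by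
  ext x
  exact hex.apply_apply_eq_zero x

lemma splice_exact0 (P : ProjectiveResolution K) (i : K ⟶ F) (p : F ⟶ T)
    (hex : Function.Exact i p) :
    (ShortComplex.mk (P.π.f 0 ≫ i) p
      (by erw [Category.assoc, ip_zero i p hex, comp_zero])).Exact := by
  rw [ShortComplex.moduleCat_exact_iff]
  intro x hx
  obtain ⟨k, hk⟩ := (hex x).1 hx
  obtain ⟨y, hy⟩ := (ModuleCat.epi_iff_surjective (P.π.f 0)).1 inferInstance k
  refine ⟨y, ?_⟩
  show i (P.π.f 0 y) = x
  rw [hy, hk]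

lemma splice_exact_succ (P : ProjectiveResolution K) (i : K ⟶ F)
    (hi : Function.Injective i) (n : ℕ) :
    ((spliced i P).sc' (n+2) (n+1) n).Exact := by
  rw [ShortComplex.moduleCat_exact_iff]
  intro x hx
  cases n with
  | zero =>
    -- x : P.complex.X 0, d10 ≫ (π0 ≫ i) kills: hx : (π0 ≫ i) x = 0
    have hx' : P.π.f 0 x = 0 := by
      apply hi
      have : ((spliced i P).sc' 2 1 0).g = P.π.f 0 ≫ i := splice_d10 i P
      rw [this] at hx
      exact hx.trans (map_zero _).symm
    have := P.exact₀
    rw [ShortComplex.moduleCat_exact_iff] at this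
    obtain ⟨y, hy⟩ := this x hx'
    refine ⟨y, ?_⟩
    have : ((spliced i P).sc' 2 1 0).f = P.complex.d 1 0 := splice_dsucc i P 0
    rw [this]; exact hy
  | succ n =>
    have hP := P.complex_exactAt_succ n
    rw [HomologicalComplex.exactAt_iff' _ (n+2) (n+1) n (by simp) (by simp),
      ShortComplex.moduleCat_exact_iff] at hP
    have hg : ((spliced i P).sc' (n+3) (n+2) (n+1)).g = P.complex.d (n+1) n :=
      splice_dsucc i P n
    have hf : ((spliced i P).sc' (n+3) (n+2) (n+1)).f = P.complex.d (n+2) (n+1) :=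
      splice_dsucc i P (n+1)
    rw [hg] at hx
    obtain ⟨y, hy⟩ := hP x hx
    refine ⟨y, ?_⟩
    rw [hf]; exact hy

def splicedRes (P : ProjectiveResolution K) (i : K ⟶ F) (p : F ⟶ T)
    (hi : Function.Injective i)
    (hp : Function.Surjective p) (hex : Function.Exact i p) [Projective F] :
    ProjectiveResolution T where
  complex := spliced i P
  π := (ChainComplex.toSingle₀Equiv _ _).symm ⟨p, by
          erw [splice_d10, Category.assoc, ip_zero i p hex, comp_zero]⟩
  quasiIso := ⟨fun n => by
    cases n with
    | zero =>
      rw [ChainComplex.quasiIsoAt₀_iff, ShortComplex.quasiIso_iff_of_zeros']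
      · refine (ShortComplex.exact_and_epi_g_iff_of_iso ?_).2
          ⟨splice_exact0 P i p hex, (ModuleCat.epi_iff_surjective p).2 hp⟩
        refine ShortComplex.isoMk (Iso.refl _) (Iso.refl _) (Iso.refl _) ?_ ?_
        · dsimp
          erw [Category.id_comp]
        · dsimp
          erw [Category.id_comp]
      all_goals rfl
    | succ n =>
      rw [quasiIsoAt_iff_exactAt' _ _ (ChainComplex.exactAt_succ_single_obj _ _)]
      rw [HomologicalComplex.exactAt_iff' _ (n+2) (n+1) n (by simp) (by simp)]
      exact splice_exact_succ P i hi n⟩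

lemma subsingleton_iff_isZero {S : Type*} [Ring S] (X : ModuleCat S) :
    Subsingleton X ↔ IsZero X := by
  constructor
  · intro h; exact ModuleCat.isZero_of_subsingleton X
  · intro h
    refine ⟨fun a b => ?_⟩
    have h0 : (𝟙 X : X ⟶ X) = 0 := h.eq_of_src _ _
    have key : ∀ x : X, x = (0 : X ⟶ X) x := fun x => by
      conv_lhs => rw [show x = (𝟙 X) x from rfl, h0]
    rw [key a, key b]
    show (0 : X →ₗ[S] X) a = (0 : X →ₗ[S] X) b
    rw [LinearMap.zero_apply, LinearMap.zero_apply]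

lemma ext_subsingleton_iff {T : ModuleCat.{u} R} (res : ProjectiveResolution T)
    (M : ModuleCat.{u} R) (n : ℕ) :
    Subsingleton (((Ext ℤ (ModuleCat.{u} R) n).obj (Opposite.op T)).obj M) ↔
      (res.complex.linearYonedaObj ℤ M).ExactAt n := by
  rw [HomologicalComplex.exactAt_iff_isZero_homology, subsingleton_iff_isZero]
  constructor
  · intro h; exact h.of_iso (res.isoExt n M).symm
  · intro h; exact h.of_iso (res.isoExt n M)

lemma homShift (i : K ⟶ F) (P : ProjectiveResolution K) (M : ModuleCat.{u} R) (m : ℕ) :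
    ((spliced i P).linearYonedaObj ℤ M).ExactAt (m+2) ↔
      (P.complex.linearYonedaObj ℤ M).ExactAt (m+1) := by
  rw [HomologicalComplex.exactAt_iff' _ (m+1) (m+2) (m+3) (by simp) (by simp),
      HomologicalComplex.exactAt_iff' _ m (m+1) (m+2) (by simp) (by simp)]
  refine ShortComplex.exact_iff_of_iso
    (ShortComplex.isoMk (Iso.refl _) (Iso.refl _) (Iso.refl _) ?_ ?_)
  · dsimp
    erw [Category.id_comp, Category.comp_id]
    simp [splice_dsucc]; rfl
  · dsimp
    erw [Category.id_comp, Category.comp_id]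
    simp [splice_dsucc]; rfl

lemma ext_shift {K F T : ModuleCat.{u} R} (i : K ⟶ F) (p : F ⟶ T)
    (hi : Function.Injective i) (hp : Function.Surjective p)
    (hex : Function.Exact i p) [Projective F] (M : ModuleCat.{u} R) (m : ℕ)
    (h : Subsingleton (((Ext ℤ (ModuleCat.{u} R) (m+1)).obj (Opposite.op K)).obj M)) :
    Subsingleton (((Ext ℤ (ModuleCat.{u} R) (m+2)).obj (Opposite.op T)).obj M) := by
  let P := ProjectiveResolution.of K
  rw [ext_subsingleton_iff (splicedRes P i p hi hp hex) M (m+2)]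
  rw [ext_subsingleton_iff P M (m+1)] at h
  exact (homShift i P M m).2 h

end
end Stmt2Aux


variable (R : Type u) [Ring R]

/-- `R` is left coherent: every finitely generated left ideal is finitely presented. -/
def IsLeftCoherentRing : Prop :=
  ∀ I : Ideal R, I.FG → Module.FinitePresentation R I

/-- The class of FP-injective modules. -/
noncomputable def FPI : Set (ModuleCat.{u} R) :=
  {M | ∀ T : ModuleCat.{u} R, Module.FinitePresentation R T → extVanish R 1 T M}

/-- Over a left coherent ring, strongly FP-injective = FP-injective. -/
theorem stmt2 (h : IsLeftCoherentRing R) : SFPI R = FPI R := by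
  apply Set.Subset.antisymm
  · intro M hM T hT
    exact hM T hT 1 le_rfl
  · intro M hM
    have key : ∀ n : ℕ, ∀ T : ModuleCat.{u} R, Module.FinitePresentation R T →
        extVanish R (n+1) T M := by
      intro n
      induction n with
      | zero => intro T hT; exact hM T hT
      | succ n ih =>
        intro T hT
        haveI : Module.FinitePresentation R T := hT
        obtain ⟨m, l, hl⟩ := Module.Finite.exists_fin' R T
        have hker : (LinearMap.ker l).FG := Module.FinitePresentation.fg_ker l hl
        haveI hKfin : Module.Finite R (LinearMap.ker l) := Module.Finite.iff_fg.mpr hker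
        have hKfp : Module.FinitePresentation R (LinearMap.ker l) :=
          Stmt2Aux.coh_aux h m _ _ _ (LinearMap.ker l).subtype
            (Submodule.injective_subtype _) hKfin
        let Kc : ModuleCat.{u} R := ModuleCat.of R (LinearMap.ker l)
        let Fc : ModuleCat.{u} R := ModuleCat.of R (Fin m → R)
        haveI : Projective Fc := ModuleCat.projective_of_free (Pi.basisFun R (Fin m))
        let ic : Kc ⟶ Fc := ModuleCat.ofHom (LinearMap.ker l).subtype
        let pc : Fc ⟶ T := ModuleCat.ofHom l
        have hex : Function.Exact ic pc := fun y => ⟨fun hy => ⟨⟨y, hy⟩, rfl⟩,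
          fun ⟨z, hz⟩ => hz ▸ z.2⟩
        show Subsingleton _
        exact Stmt2Aux.ext_shift ic pc (Submodule.injective_subtype _) hl hex M n
          (ih Kc hKfp)
    intro T hT n hn
    obtain ⟨k, rfl⟩ := Nat.exists_eq_add_of_le hn
    rw [Nat.add_comm 1 k]
    exact key k T hT
end

section
/- In the pullback square arising from a special C-precover 0 → S → C → M → 0 (S ∈ E) and a special D-precover 0 → X → D → C → 0 (X ∈ D⊥, D ∈ D ⊆ C), the kernel V of the induced map D → M fits in an exact sequence 0 → X → V → S → 0 and satisfies Ext^1(D', V) = 0 for all D' ∈ D. -/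
open CategoryTheory Limits

universe u

variable (R : Type u) [Ring R]

lemma isZero_iff_subsingleton {S : Type*} [Ring S] (M : ModuleCat.{u} S) :
    IsZero M ↔ Subsingleton M := by
  constructor
  · intro h
    refine ⟨fun a b => ?_⟩
    have h1 : (𝟙 M : M ⟶ M) = 0 := h.eq_of_src _ _
    calc a = (𝟙 M : M ⟶ M) a := rfl
    _ = (0 : M ⟶ M) a := by rw [h1]
    _ = (0 : M ⟶ M) b := rfl
    _ = (𝟙 M : M ⟶ M) b := by rw [h1]
    _ = b := rfl
  · intro h
    exact ModuleCat.isZero_of_subsingleton M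

lemma extVanish_iff_lifting (D' N : ModuleCat.{u} R) (P : ProjectiveResolution D') :
    extVanish R 1 D' N ↔
      ∀ f : P.complex.X 1 ⟶ N, P.complex.d 2 1 ≫ f = 0 →
        ∃ g : P.complex.X 0 ⟶ N, P.complex.d 1 0 ≫ g = f := by
  rw [extVanish, ← isZero_iff_subsingleton]
  rw [(P.isoExt (R := ℤ) 1 N).isZero_iff]
  rw [← HomologicalComplex.exactAt_iff_isZero_homology]
  rw [HomologicalComplex.exactAt_iff' _ 0 1 2 (by simp) (by simp)]
  rw [ShortComplex.moduleCat_exact_iff]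
  constructor
  · intro h f hf
    exact h f hf
  · intro h f hf
    exact h f hf

lemma extVanish_of_ses (D' : ModuleCat.{u} R) {X V S' : ModuleCat.{u} R}
    (i' : X ⟶ V) (q : V ⟶ S') (hse : IsShortExact R i' q)
    (hX : extVanish R 1 D' X) (hS : extVanish R 1 D' S') :
    extVanish R 1 D' V := by
  obtain ⟨hinj, hsurj, hexact⟩ := hse
  have P : ProjectiveResolution D' := (HasProjectiveResolution.out (Z := D')).some
  rw [extVanish_iff_lifting R D' X P] at hX
  rw [extVanish_iff_lifting R D' S' P] at hS
  rw [extVanish_iff_lifting R D' V P]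
  intro f hf
  obtain ⟨g, hg⟩ := hS (f ≫ q) (by rw [← Category.assoc, hf, zero_comp])
  haveI : Epi q := (ModuleCat.epi_iff_surjective q).mpr hsurj
  let h : P.complex.X 0 ⟶ V := Projective.factorThru g q
  have hh : h ≫ q = g := Projective.factorThru_comp g q
  set φ : P.complex.X 1 ⟶ V := f - P.complex.d 1 0 ≫ h with hφdef
  have hφq : φ ≫ q = 0 := by
    rw [hφdef, Preadditive.sub_comp, Category.assoc, hh, hg, sub_self]
  have hmem : ∀ x, φ x ∈ LinearMap.range i'.hom := by
    intro x
    have : q (φ x) = 0 := by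
      have := congrArg (fun (ψ : P.complex.X 1 ⟶ S') => ψ x) hφq
      simpa using this
    exact LinearMap.mem_range.mpr ((hexact (φ x)).mp this)
  let e : X ≃ₗ[R] LinearMap.range i'.hom := LinearEquiv.ofInjective i'.hom hinj
  let k : P.complex.X 1 ⟶ X := ModuleCat.ofHom <|
    (e.symm : LinearMap.range i'.hom →ₗ[R] X).comp
      (LinearMap.codRestrict _ φ.hom hmem)
  have hki : k ≫ i' = φ := by
    ext x
    show i' (e.symm ⟨φ x, hmem x⟩) = φ x
    have : i'.hom (e.symm ⟨φ x, hmem x⟩) = ↑(e (e.symm ⟨φ x, hmem x⟩)) := rfl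
    rw [this, e.apply_symm_apply]
  have hk2 : P.complex.d 2 1 ≫ k = 0 := by
    have hmono : Mono i' := (ModuleCat.mono_iff_injective i').mpr hinj
    rw [← cancel_mono i', Category.assoc, hki, zero_comp, hφdef,
      Preadditive.comp_sub, hf, ← Category.assoc, HomologicalComplex.d_comp_d,
      zero_comp, sub_zero]
  obtain ⟨m, hm⟩ := hX k hk2
  refine ⟨m ≫ i' + h, ?_⟩
  rw [Preadditive.comp_add, ← Category.assoc, hm, hki]
  rw [hφdef]
  abel

/-- In the pullback situation from a special `𝒞`-precover
`0 → S → C₀ → M → 0` (`S ∈ ℰ`) and a special `𝒟`-precover `0 → X → D₀ → C₀ → 0`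
(`X ∈ 𝒟^⊥`, `D₀ ∈ 𝒟`), the kernel `V` of the composite `D₀ → M` fits in an exact
sequence `0 → X → V → S → 0` and satisfies `Ext¹(D', V) = 0` for all `D' ∈ 𝒟`. -/
theorem stmt17 (C E D : Set (ModuleCat.{u} R))
    (hcp : IsCotorsionPair R C E) (hcomplete : IsCompletePair R C E)
    (hhered : IsHereditaryPair R C E) (hDC : D ⊆ C)
    (S C₀ M X D₀ : ModuleCat.{u} R)
    (f : S ⟶ C₀) (g : C₀ ⟶ M) (i : X ⟶ D₀) (p : D₀ ⟶ C₀)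
    (hS : S ∈ E) (hC₀ : C₀ ∈ C) (hse1 : IsShortExact R f g)
    (hX : X ∈ rightOrth R D) (hD₀ : D₀ ∈ D) (hse2 : IsShortExact R i p) :
    (∃ (i' : X ⟶ ModuleCat.of R (LinearMap.ker (p ≫ g).hom))
        (q : ModuleCat.of R (LinearMap.ker (p ≫ g).hom) ⟶ S), IsShortExact R i' q) ∧
      ModuleCat.of R (LinearMap.ker (p ≫ g).hom) ∈ rightOrth R D := by
  obtain ⟨hinj1, hsurj1, hexact1⟩ := hse1
  obtain ⟨hinj2, hsurj2, hexact2⟩ := hse2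
  set V := ModuleCat.of R (LinearMap.ker (p ≫ g).hom) with hVdef
  -- the inclusion X → V
  have hiker : ∀ x : X, i x ∈ LinearMap.ker (p ≫ g).hom := by
    intro x
    have hpi : p (i x) = 0 := (hexact2 (i x)).mpr ⟨x, rfl⟩
    show g (p (i x)) = 0
    rw [hpi, map_zero]
  let i' : X ⟶ V := ModuleCat.ofHom (LinearMap.codRestrict (LinearMap.ker (p ≫ g).hom) i.hom hiker)
  -- the projection V → S
  have hmem : ∀ v : V, p v.1 ∈ LinearMap.range f.hom := by
    intro v
    have : g (p v.1) = 0 := v.2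
    exact LinearMap.mem_range.mpr ((hexact1 (p v.1)).mp this)
  let e : S ≃ₗ[R] LinearMap.range f.hom := LinearEquiv.ofInjective f.hom hinj1
  let q : V ⟶ S := ModuleCat.ofHom <|
    (e.symm : LinearMap.range f.hom →ₗ[R] S).comp
      (LinearMap.codRestrict _ (p.hom.comp
        (LinearMap.ker (p ≫ g).hom).subtype) hmem)
  have hq_apply : ∀ v : V, q v = e.symm ⟨p v.1, hmem v⟩ := fun v => rfl
  have he_coe : ∀ s : S, ((e s : LinearMap.range f.hom) : C₀) = f s := by
    intro s; rfl
  -- injectivity of i'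
  have hi'inj : Function.Injective i' := by
    intro a b hab
    exact hinj2 (congrArg Subtype.val hab)
  -- surjectivity of q
  have hqsurj : Function.Surjective q := by
    intro s
    obtain ⟨d, hd⟩ := hsurj2 (f s)
    have hdker : d ∈ LinearMap.ker (p ≫ g).hom := by
      show g (p d) = 0
      rw [hd]
      exact (hexact1 (f s)).mpr ⟨s, rfl⟩
    refine ⟨⟨d, hdker⟩, ?_⟩
    rw [hq_apply]
    rw [LinearEquiv.symm_apply_eq]
    apply Subtype.ext
    rw [he_coe]
    exact hd
  -- exactness
  have hexact' : Function.Exact i' q := by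
    intro v
    constructor
    · intro hv
      have hpv : p v.1 = 0 := by
        rw [hq_apply] at hv
        rw [LinearEquiv.symm_apply_eq, map_zero] at hv
        have := congrArg Subtype.val hv
        simpa using this
      obtain ⟨x, hx⟩ := (hexact2 v.1).mp hpv
      exact ⟨x, Subtype.ext hx⟩
    · rintro ⟨x, rfl⟩
      rw [hq_apply]
      rw [LinearEquiv.symm_apply_eq, map_zero]
      apply Subtype.ext
      show p (i x) = (0 : C₀)
      exact (hexact2 (i x)).mpr ⟨x, rfl⟩
  have hses : IsShortExact R i' q := ⟨hi'inj, hqsurj, hexact'⟩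
  refine ⟨⟨i', q, hses⟩, ?_⟩
  intro D' hD'
  have hDC' : D' ∈ C := hDC hD'
  have hS' : extVanish R 1 D' S := by
    rw [hcp.1] at hDC'
    exact hDC' S hS
  exact extVanish_of_ses R D' i' q hses (hX D' hD') hS'
end
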